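/- Let F = u vᵀ − v uᵀ be a decomposable real antisymmetric 4×4 matrix of unit norm such that both the Kähler form and Im Ω vanish on the plane spanned by u and v (a special Lagrangian plane): ⟨ω, F⟩ = 0 and ⟨Im Ω, F⟩ = 0. Then the plane span{u, v} is a complex line with respect to the complex structure J̃ determined by Re Ω, i.e. it is invariant under the matrix J̃ with rows (0,0,−1,0), (0,0,0,1), (1,0,0,0), (0,−1,0,0): the special Lagrangian planes with respect to (ω, Ω) coincide with the complex planes for J̃ = Re Ω. -/

import Mathlib

open Matrix

/-- The Hodge star operator on (antisymmetric) real 4×4 matrices, determined by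
`(⋆F)₁₂ = F₃₄`, `(⋆F)₁₃ = −F₂₄`, `(⋆F)₁₄ = F₂₃`, `(⋆F)₂₃ = F₁₄`,
`(⋆F)₂₄ = −F₁₃`, `(⋆F)₃₄ = F₁₂` (indices here are 1-based). -/
def hodge (F : Matrix (Fin 4) (Fin 4) ℝ) : Matrix (Fin 4) (Fin 4) ℝ :=
  !![0, F 2 3, -(F 1 3), F 1 2;
     -(F 2 3), 0, F 0 3, -(F 0 2);
     F 1 3, -(F 0 3), 0, F 0 1;
     -(F 1 2), F 0 2, -(F 0 1), 0]

/-- The inner product `⟨F,G⟩ = Σ_{i<j} F_{ij} G_{ij}` on 4×4 matrices. -/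
def inner2 (F G : Matrix (Fin 4) (Fin 4) ℝ) : ℝ :=
  ∑ i : Fin 4, ∑ j : Fin 4, if i < j then F i j * G i j else 0

/-- The projection `P₊ = ½(1 + ⋆)` onto self-dual matrices. -/
noncomputable def Pplus (F : Matrix (Fin 4) (Fin 4) ℝ) : Matrix (Fin 4) (Fin 4) ℝ :=
  (1/2 : ℝ) • (F + hodge F)

/-- The projection `P₋ = ½(1 − ⋆)` onto anti-self-dual matrices. -/
noncomputable def Pminus (F : Matrix (Fin 4) (Fin 4) ℝ) : Matrix (Fin 4) (Fin 4) ℝ :=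
  (1/2 : ℝ) • (F - hodge F)

/-- if `F = uvᵀ − vuᵀ` is decomposable of unit norm and both the Kähler
form `ω = dx¹∧dx² + dx³∧dx⁴` and `Im Ω = dx¹∧dx⁴ + dx²∧dx³` vanish on the plane
`span{u,v}` (a special Lagrangian plane), then this plane is invariant under the
complex structure `J̃` determined by `Re Ω`: special Lagrangian planes for `(ω, Ω)`
are exactly complex planes for `J̃ = Re Ω`. -/
theorem stmt_9 (u v : Fin 4 → ℝ) (F : Matrix (Fin 4) (Fin 4) ℝ)
    (hF : F = Matrix.vecMulVec u v - Matrix.vecMulVec v u)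
    (hnorm : inner2 F F = 1)
    (homega : inner2 !![0, 1, 0, 0;
                        -1, 0, 0, 0;
                        0, 0, 0, 1;
                        0, 0, -1, 0] F = 0)
    (hImOmega : inner2 !![0, 0, 0, 1;
                          0, 0, 1, 0;
                          0, -1, 0, 0;
                          -1, 0, 0, 0] F = 0) :
    (!![0, 0, -1, 0;
        0, 0, 0, 1;
        1, 0, 0, 0;
        0, -1, 0, 0] : Matrix (Fin 4) (Fin 4) ℝ) *ᵥ u ∈ Submodule.span ℝ {u, v} ∧
    (!![0, 0, -1, 0;
        0, 0, 0, 1;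
        1, 0, 0, 0;
        0, -1, 0, 0] : Matrix (Fin 4) (Fin 4) ℝ) *ᵥ v ∈ Submodule.span ℝ {u, v} := by
  subst hF
  simp only [inner2, Fin.sum_univ_four, Matrix.sub_apply, Matrix.vecMulVec_apply,
    Matrix.cons_val', Matrix.cons_val_zero, Matrix.cons_val_one, Matrix.head_cons,
    Matrix.empty_val', Matrix.cons_val_fin_one, Matrix.head_fin_const,
    Matrix.cons_val_two, Matrix.tail_cons, Matrix.cons_val_three] at homega hImOmega hnorm
  simp only [Fin.reduceLT, Fin.reduceEq, if_true, if_false, Matrix.vecHead, Matrix.vecTail,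
    ite_true, ite_false, reduceIte, Function.comp] at homega hImOmega hnorm
  norm_num [Matrix.vecHead, Matrix.vecTail] at homega hImOmega hnorm
  simp [Matrix.cons_val] at homega hImOmega
  have h1 : (u 0 * v 1 - u 1 * v 0) + (u 2 * v 3 - u 3 * v 2) = 0 := by linarith
  have h2 : (u 0 * v 3 - u 3 * v 0) + (u 1 * v 2 - u 2 * v 1) = 0 := by linarith
  have h3 : (u 0 * v 1 - u 1 * v 0)^2 + (u 0 * v 2 - u 2 * v 0)^2 + (u 0 * v 3 - u 3 * v 0)^2
      + (u 1 * v 2 - u 2 * v 1)^2 + (u 1 * v 3 - u 3 * v 1)^2 + (u 2 * v 3 - u 3 * v 2)^2 = 1 := by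
    linear_combination hnorm
  constructor
  · rw [Submodule.mem_span_pair]
    refine ⟨-((v 2 * u 0 - v 3 * u 1 - v 0 * u 2 + v 1 * u 3) * (u 0 * v 0 + u 1 * v 1 + u 2 * v 2 + u 3 * v 3)), (v 2 * u 0 - v 3 * u 1 - v 0 * u 2 + v 1 * u 3) * (u 0 * u 0 + u 1 * u 1 + u 2 * u 2 + u 3 * u 3), funext fun i => ?_⟩
    fin_cases i <;>
      simp [Matrix.mulVec, dotProduct, Fin.sum_univ_four, Matrix.vecHead,
        Matrix.vecTail]
    · linear_combination ((-1) * u 2 * u 3 * v 2 + u 2 * u 2 * v 3 + (-1) * u 1 * u 3 * v 1 + u 1 * u 1 * v 3 + (-1) * u 0 * u 3 * v 0 + u 0 * u 0 * v 3) * h1 + ((-1) * u 3 * u 3 * v 1 + (-1) * u 2 * u 2 * v 1 + u 1 * u 3 * v 3 + u 1 * u 2 * v 2 + u 0 * u 1 * v 0 + (-1) * u 0 * u 0 * v 1) * h2 + ((-1) * u 2) * h3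
    · linear_combination (u 3 * u 3 * v 2 + (-1) * u 2 * u 3 * v 3 + (-1) * u 1 * u 2 * v 1 + u 1 * u 1 * v 2 + (-1) * u 0 * u 2 * v 0 + u 0 * u 0 * v 2) * h1 + (u 3 * u 3 * v 0 + u 2 * u 2 * v 0 + u 1 * u 1 * v 0 + (-1) * u 0 * u 3 * v 3 + (-1) * u 0 * u 2 * v 2 + (-1) * u 0 * u 1 * v 1) * h2 + (u 3) * h3
    · linear_combination ((-1) * u 3 * u 3 * v 1 + u 2 * u 3 * v 0 + u 1 * u 3 * v 3 + (-1) * u 0 * u 2 * v 3 + u 0 * u 1 * v 0 + (-1) * u 0 * u 0 * v 1) * h1 + (u 1 * u 3 * v 1 + (-1) * u 1 * u 2 * v 0 + (-1) * u 1 * u 1 * v 3 + u 0 * u 3 * v 0 + u 0 * u 2 * v 1 + (-1) * u 0 * u 0 * v 3) * h2 + (u 0) * h3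
    · linear_combination (u 2 * u 3 * v 1 + (-1) * u 2 * u 2 * v 0 + (-1) * u 1 * u 3 * v 2 + (-1) * u 1 * u 1 * v 0 + u 0 * u 2 * v 2 + u 0 * u 1 * v 1) * h1 + ((-1) * u 1 * u 3 * v 0 + (-1) * u 1 * u 2 * v 1 + u 1 * u 1 * v 2 + u 0 * u 3 * v 1 + (-1) * u 0 * u 2 * v 0 + u 0 * u 0 * v 2) * h2 + ((-1) * u 1) * h3
  · rw [Submodule.mem_span_pair]
    refine ⟨-((v 2 * u 0 - v 3 * u 1 - v 0 * u 2 + v 1 * u 3) * (v 0 * v 0 + v 1 * v 1 + v 2 * v 2 + v 3 * v 3)), (v 2 * u 0 - v 3 * u 1 - v 0 * u 2 + v 1 * u 3) * (u 0 * v 0 + u 1 * v 1 + u 2 * v 2 + u 3 * v 3), funext fun i => ?_⟩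
    fin_cases i <;>
      simp [Matrix.mulVec, dotProduct, Fin.sum_univ_four, Matrix.vecHead,
        Matrix.vecTail]
    · linear_combination ((-1) * u 3 * v 2 * v 2 + (-1) * u 3 * v 1 * v 1 + (-1) * u 3 * v 0 * v 0 + u 2 * v 2 * v 3 + u 1 * v 1 * v 3 + u 0 * v 0 * v 3) * h1 + ((-1) * u 3 * v 1 * v 3 + (-1) * u 2 * v 1 * v 2 + u 1 * v 3 * v 3 + u 1 * v 2 * v 2 + u 1 * v 0 * v 0 + (-1) * u 0 * v 0 * v 1) * h2 + ((-1) * v 2) * h3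
    · linear_combination (u 3 * v 2 * v 3 + (-1) * u 2 * v 3 * v 3 + (-1) * u 2 * v 1 * v 1 + (-1) * u 2 * v 0 * v 0 + u 1 * v 1 * v 2 + u 0 * v 0 * v 2) * h1 + (u 3 * v 0 * v 3 + u 2 * v 0 * v 2 + u 1 * v 0 * v 1 + (-1) * u 0 * v 3 * v 3 + (-1) * u 0 * v 2 * v 2 + (-1) * u 0 * v 1 * v 1) * h2 + (v 3) * h3
    · linear_combination ((-1) * u 3 * v 1 * v 3 + u 3 * v 0 * v 2 + u 1 * v 3 * v 3 + u 1 * v 0 * v 0 + (-1) * u 0 * v 2 * v 3 + (-1) * u 0 * v 0 * v 1) * h1 + (u 3 * v 1 * v 1 + u 3 * v 0 * v 0 + (-1) * u 1 * v 1 * v 3 + (-1) * u 1 * v 0 * v 2 + u 0 * v 1 * v 2 + (-1) * u 0 * v 0 * v 3) * h2 + (v 0) * h3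
    · linear_combination (u 2 * v 1 * v 3 + (-1) * u 2 * v 0 * v 2 + (-1) * u 1 * v 2 * v 3 + (-1) * u 1 * v 0 * v 1 + u 0 * v 2 * v 2 + u 0 * v 1 * v 1) * h1 + ((-1) * u 2 * v 1 * v 1 + (-1) * u 2 * v 0 * v 0 + u 1 * v 1 * v 2 + (-1) * u 1 * v 0 * v 3 + u 0 * v 1 * v 3 + u 0 * v 0 * v 2) * h2 + ((-1) * v 1) * h3
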